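/- Let d ≥ 1. There exists a constant C > 0, depending only on d, such that for every Schwartz function u : ℝ^d → ℝ one has ‖∇u‖_{L^∞(ℝ^d)} ≤ C ( ‖u‖_{L²(ℝ^d)} + ‖∇²u‖_{L^∞(ℝ^d)} ). -/

import Mathlib

open MeasureTheory Real
open scoped ENNReal

/-- **Low/high frequency interpolation inequality.** There is a constant `C = C(d)` such
that every Schwartz function `u : ℝ^d → ℝ` satisfies
`‖∇u‖_{L^∞} ≤ C (‖u‖_{L²} + ‖∇²u‖_{L^∞})`. -/
theorem gradient_interpolation (d : ℕ) (hd : 1 ≤ d) :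
    ∃ C > 0, ∀ u : SchwartzMap (EuclideanSpace ℝ (Fin d)) ℝ,
      eLpNorm (iteratedFDeriv ℝ 1 ⇑u) ⊤ volume ≤
        ENNReal.ofReal C *
          (eLpNorm (⇑u) 2 volume + eLpNorm (iteratedFDeriv ℝ 2 ⇑u) ⊤ volume) := by
  classical
  set E := EuclideanSpace ℝ (Fin d)
  -- the volume of a ball of radius 1/4
  set VB : ℝ≥0∞ := volume (Metric.ball (0 : E) (1/4)) with hVB
  have hVB0 : VB ≠ 0 := (Metric.measure_ball_pos volume 0 (by norm_num)).ne'
  have hVBtop : VB ≠ ⊤ := measure_ball_lt_top.ne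
  set W : ℝ≥0∞ := VB ^ (1/2 : ℝ) with hW
  have hW0 : W ≠ 0 := by
    simp only [hW, ne_eq, ENNReal.rpow_eq_zero_iff]
    push_neg
    exact ⟨fun h => absurd h hVB0, fun h => absurd h hVBtop⟩
  have hWtop : W ≠ ⊤ := by
    simp only [hW, ne_eq, ENNReal.rpow_eq_top_iff]
    push_neg
    exact ⟨fun h => absurd h hVB0, fun h => absurd h hVBtop⟩
  set w : ℝ := W.toReal with hw
  have hwpos : 0 < w := ENNReal.toReal_pos hW0 hWtop
  clear_value w
  have h4w : 0 < 4 / w := div_pos (by norm_num) hwpos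
  refine ⟨2 + 4 / w, by linarith, fun u => ?_⟩
  set C : ℝ := 2 + 4 / w with hC
  have hCpos : 0 < C := by rw [hC]; linarith
  clear_value C
  by_cases htop : eLpNorm (⇑u) 2 volume = ⊤
  · have hC0 : ENNReal.ofReal C ≠ 0 := by
      simp only [ne_eq, ENNReal.ofReal_eq_zero, not_le]; exact hCpos
    rw [htop, top_add, ENNReal.mul_top hC0]
    exact le_top
  -- real L² norm
  set A : ℝ := (eLpNorm (⇑u) 2 volume).toReal with hA
  have hApos : 0 ≤ A := ENNReal.toReal_nonneg
  have hAeq : eLpNorm (⇑u) 2 volume = ENNReal.ofReal A := by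
    rw [hA]; exact (ENNReal.ofReal_toReal htop).symm
  clear_value A
  -- finiteness of the L^∞ norm of the second derivative
  have hcont2 : Continuous (iteratedFDeriv ℝ 2 ⇑u) :=
    (u.smooth ⊤).continuous_iteratedFDeriv (by exact WithTop.coe_le_coe.mpr le_top)
  have hM2top : eLpNorm (iteratedFDeriv ℝ 2 ⇑u) ⊤ volume ≠ ⊤ := by
    obtain ⟨B, -, hB⟩ := u.decay 0 2
    have hB' : ∀ x, ‖iteratedFDeriv ℝ 2 (⇑u) x‖ ≤ B := by
      intro x; have := hB x; simpa using this
    rw [eLpNorm_exponent_top]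
    exact ((eLpNormEssSup_le_of_ae_bound (ae_of_all _ hB')).trans_lt ENNReal.ofReal_lt_top).ne
  set m2 : ℝ := (eLpNorm (iteratedFDeriv ℝ 2 ⇑u) ⊤ volume).toReal with hm2def
  have hm2pos : 0 ≤ m2 := by rw [hm2def]; exact ENNReal.toReal_nonneg
  clear_value m2
  -- everywhere bound by m2, via continuity
  have hm2 : ∀ x, ‖iteratedFDeriv ℝ 2 (⇑u) x‖ ≤ m2 := by
    by_contra h
    push_neg at h
    obtain ⟨x₀, hx₀⟩ := h
    have hopen : IsOpen {x : E | m2 < ‖iteratedFDeriv ℝ 2 (⇑u) x‖} :=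
      isOpen_lt continuous_const hcont2.norm
    have hpos : 0 < volume {x : E | m2 < ‖iteratedFDeriv ℝ 2 (⇑u) x‖} :=
      hopen.measure_pos volume ⟨x₀, hx₀⟩
    have hae : ∀ᵐ x ∂(volume : Measure E), ‖iteratedFDeriv ℝ 2 (⇑u) x‖ ≤ m2 := by
      filter_upwards [ae_le_eLpNormEssSup (f := iteratedFDeriv ℝ 2 ⇑u) (μ := volume)] with x hx
      have : (‖iteratedFDeriv ℝ 2 (⇑u) x‖₊ : ℝ≥0∞) ≤ eLpNorm (iteratedFDeriv ℝ 2 ⇑u) ⊤ volume := by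
        rwa [eLpNorm_exponent_top]
      calc ‖iteratedFDeriv ℝ 2 (⇑u) x‖
          = ((‖iteratedFDeriv ℝ 2 (⇑u) x‖₊ : ℝ≥0∞)).toReal := by simp
        _ ≤ m2 := by rw [hm2def]; exact ENNReal.toReal_mono hM2top this
    rw [ae_iff] at hae
    have : volume {x : E | m2 < ‖iteratedFDeriv ℝ 2 (⇑u) x‖} = 0 := by
      refine measure_mono_null ?_ hae
      intro x hx; exact not_le.mpr (show m2 < ‖iteratedFDeriv ℝ 2 (⇑u) x‖ from hx)
    exact absurd this hpos.ne'
  -- norms of iterated derivatives vs fderiv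
  have e1 : ∀ {G : Type} [NormedAddCommGroup G] [NormedSpace ℝ G] (g : E → G) (x : E),
      ‖iteratedFDeriv ℝ 1 g x‖ = ‖fderiv ℝ g x‖ := by
    intro G _ _ g x
    rw [← norm_iteratedFDeriv_fderiv (n := 0), norm_iteratedFDeriv_zero]
  have e2 : ∀ x : E, ‖fderiv ℝ (fderiv ℝ ⇑u) x‖ = ‖iteratedFDeriv ℝ 2 (⇑u) x‖ := by
    intro x
    rw [← norm_iteratedFDeriv_fderiv (n := 1), e1]
  -- differentiability of fderiv u
  have hfd : Differentiable ℝ (fderiv ℝ ⇑u) :=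
    ((u.smooth ⊤).fderiv_right (m := 1) (by exact WithTop.coe_le_coe.mpr le_top)).differentiable one_ne_zero
  -- Lipschitz bound on fderiv u
  have hLip2 : ∀ y z : E, ‖fderiv ℝ (⇑u) y - fderiv ℝ (⇑u) z‖ ≤ m2 * ‖y - z‖ := by
    intro y z
    exact convex_univ.norm_image_sub_le_of_norm_fderiv_le
      (fun x _ => hfd.differentiableAt)
      (fun x _ => (e2 x).le.trans (hm2 x)) (Set.mem_univ z) (Set.mem_univ y)
  -- sup bound M on fderiv u
  have hbdd : BddAbove (Set.range fun x : E => ‖fderiv ℝ (⇑u) x‖) := by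
    obtain ⟨B, -, hB⟩ := u.decay 0 1
    refine ⟨B, ?_⟩
    rintro _ ⟨x, rfl⟩
    have := hB x
    rw [pow_zero, one_mul] at this
    exact (e1 (⇑u) x).symm.le.trans this
  set M : ℝ := ⨆ x : E, ‖fderiv ℝ (⇑u) x‖ with hM
  have hMle : ∀ x : E, ‖fderiv ℝ (⇑u) x‖ ≤ M := fun x => le_ciSup hbdd x
  have hMpos : 0 ≤ M := by rw [hM]; exact Real.iSup_nonneg fun x => norm_nonneg _
  -- u is M-Lipschitz
  have hLip1 : ∀ y z : E, ‖u y - u z‖ ≤ M * ‖y - z‖ := by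
    intro y z
    exact convex_univ.norm_image_sub_le_of_norm_fderiv_le
      (fun x _ => u.differentiableAt) (fun x _ => hMle x) (Set.mem_univ z) (Set.mem_univ y)
  -- Taylor estimate
  have taylor : ∀ (x v : E), ‖v‖ = 1 → ‖u (x + v) - u x - fderiv ℝ (⇑u) x v‖ ≤ m2 := by
    intro x v hv
    set L := fderiv ℝ (⇑u) x with hL
    set g : E → ℝ := fun y => u y - L y with hg
    have hgd : ∀ y ∈ Metric.closedBall x 1, DifferentiableAt ℝ g y :=
      fun y _ => u.differentiableAt.sub L.differentiableAt
    have hgder : ∀ y, fderiv ℝ g y = fderiv ℝ (⇑u) y - L := by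
      intro y
      rw [hg]
      rw [fderiv_fun_sub u.differentiableAt L.differentiableAt, L.fderiv]
    have hgb : ∀ y ∈ Metric.closedBall x 1, ‖fderiv ℝ g y‖ ≤ m2 := by
      intro y hy
      rw [hgder y, hL]
      refine (hLip2 y x).trans ?_
      have : ‖y - x‖ ≤ 1 := by
        rw [← dist_eq_norm]; exact Metric.mem_closedBall.mp hy
      nlinarith
    have hx : x ∈ Metric.closedBall x 1 := Metric.mem_closedBall_self one_pos.le
    have hxv : x + v ∈ Metric.closedBall x 1 := by
      rw [Metric.mem_closedBall, dist_eq_norm, add_sub_cancel_left, hv]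
    have key := (convex_closedBall x 1).norm_image_sub_le_of_norm_fderiv_le hgd hgb hx hxv
    have hgeq : g (x + v) - g x = u (x + v) - u x - L v := by
      simp only [hg, L.map_add]; ring
    rw [hgeq, add_sub_cancel_left, hv, mul_one] at key
    exact key
  -- sup bound on u itself
  have hsup : ∀ y : E, |u y| ≤ M / 4 + A / w := by
    intro y
    obtain ⟨b, hb⟩ : ∃ b : ℝ, b = |u y| - M / 4 := ⟨_, rfl⟩
    rcases le_or_gt b 0 with hb0 | hb0
    · have hq1 : |u y| ≤ M / 4 := by linarith
      have hq2 : A / w ≥ 0 := div_nonneg hApos hwpos.le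
      linarith
    -- lower bound on |u z| on the ball
    have hlow : ∀ z ∈ Metric.ball y (1/4 : ℝ), b ≤ |u z| := by
      intro z hz
      have h1 : ‖u y - u z‖ ≤ M * ‖y - z‖ := hLip1 y z
      have h2 : ‖y - z‖ ≤ 1/4 := by
        rw [← dist_eq_norm]
        exact le_of_lt (by rwa [Metric.mem_ball, dist_comm] at hz)
      have h3 : |u y - u z| ≤ M / 4 := by
        rw [Real.norm_eq_abs] at h1
        nlinarith
      have := abs_sub_abs_le_abs_sub (u y) (u z)
      linarith
    -- the square lintegral
    set I : ℝ≥0∞ := ∫⁻ z, (‖u z‖₊ : ℝ≥0∞) ^ (2:ℝ) ∂(volume : Measure E) with hI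
    have hIeq : I ^ (1/2 : ℝ) = ENNReal.ofReal A := by
      rw [← hAeq, eLpNorm_eq_lintegral_rpow_enorm_toReal two_ne_zero ENNReal.ofNat_ne_top]
      norm_num [hI, enorm_eq_nnnorm]; rfl
    have hmeas : Measurable (fun z : E => (‖u z‖₊ : ℝ≥0∞) ^ (2:ℝ)) :=
      (u.continuous.measurable.nnnorm.coe_nnreal_ennreal).pow_const _
    have h1 : ENNReal.ofReal b ^ (2:ℝ) * volume (Metric.ball y (1/4 : ℝ)) ≤ I := by
      calc ENNReal.ofReal b ^ (2:ℝ) * volume (Metric.ball y (1/4 : ℝ))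
          = ∫⁻ _ in Metric.ball y (1/4 : ℝ), ENNReal.ofReal b ^ (2:ℝ) ∂volume := by
            rw [setLIntegral_const]
        _ ≤ ∫⁻ z in Metric.ball y (1/4 : ℝ), (‖u z‖₊ : ℝ≥0∞) ^ (2:ℝ) ∂volume := by
            refine setLIntegral_mono hmeas ?_
            intro z hz
            have hbz : b ≤ |u z| := hlow z hz
            have : ENNReal.ofReal b ≤ (‖u z‖₊ : ℝ≥0∞) := by
              rw [← enorm_eq_nnnorm, Real.enorm_eq_ofReal_abs]
              exact ENNReal.ofReal_le_ofReal hbz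
            exact ENNReal.rpow_le_rpow this (by norm_num)
        _ ≤ I := setLIntegral_le_lintegral _ _
    -- take square roots
    have hball : volume (Metric.ball y (1/4 : ℝ)) = VB := Measure.addHaar_ball_center volume y _
    rw [hball] at h1
    have h2 : ENNReal.ofReal b * W ≤ ENNReal.ofReal A := by
      have := ENNReal.rpow_le_rpow h1 (by norm_num : (0:ℝ) ≤ 1/2)
      rw [hIeq] at this
      calc ENNReal.ofReal b * W
          = (ENNReal.ofReal b ^ (2:ℝ) * VB) ^ (1/2 : ℝ) := by
            rw [ENNReal.mul_rpow_of_nonneg _ _ (by norm_num : (0:ℝ) ≤ 1/2),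
              ← ENNReal.rpow_mul]
            norm_num [hW]
        _ ≤ ENNReal.ofReal A := this
    have h3 : b * w ≤ A := by
      have := ENNReal.toReal_mono (by simp) h2
      rwa [ENNReal.toReal_mul, ENNReal.toReal_ofReal hb0.le, ENNReal.toReal_ofReal hApos,
        ← hw] at this
    have : b ≤ A / w := by
      rw [le_div_iff₀ hwpos]; linarith
    linarith
  -- pointwise bound on the gradient
  have hgrad : ∀ x : E, ‖fderiv ℝ (⇑u) x‖ ≤ m2 + M / 2 + 2 * (A / w) := by
    intro x
    have hAw0 : 0 ≤ A / w := div_nonneg hApos hwpos.le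
    refine ContinuousLinearMap.opNorm_le_of_unit_norm (by linarith) ?_
    intro v hv
    have ht := taylor x v hv
    have h1 : ‖fderiv ℝ (⇑u) x v‖ ≤ ‖u (x + v)‖ + ‖u x‖ + m2 := by
      have : fderiv ℝ (⇑u) x v = (u (x+v) - u x) - (u (x+v) - u x - fderiv ℝ (⇑u) x v) := by ring
      rw [this]
      calc ‖(u (x+v) - u x) - (u (x+v) - u x - fderiv ℝ (⇑u) x v)‖
          ≤ ‖u (x+v) - u x‖ + ‖u (x+v) - u x - fderiv ℝ (⇑u) x v‖ := norm_sub_le _ _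
        _ ≤ (‖u (x+v)‖ + ‖u x‖) + m2 := add_le_add (norm_sub_le _ _) ht
    have h2 := hsup (x + v)
    have h3 := hsup x
    rw [Real.norm_eq_abs] at h1 ⊢
    simp only [Real.norm_eq_abs] at h1
    linarith
  -- absorption
  have hMfinal : M ≤ 2 * m2 + 4 * (A / w) := by
    have h := ciSup_le hgrad
    rw [← hM] at h
    linarith
  -- conclude
  have hpt : ∀ x : E, ‖iteratedFDeriv ℝ 1 (⇑u) x‖ ≤ C * (A + m2) := by
    intro x
    rw [e1]
    refine (hMle x).trans (hMfinal.trans ?_)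
    have hAw : 4 * (A / w) = (4 / w) * A := by ring
    have hc2 : (2:ℝ) ≤ C := by rw [hC]; linarith
    have hc4 : (4 / w) ≤ C := by rw [hC]; linarith
    have h1 : 2 * m2 ≤ C * m2 := by nlinarith
    have h2 : (4 / w) * A ≤ C * A := by nlinarith
    have hexp : C * (A + m2) = C * A + C * m2 := by ring
    linarith
  calc eLpNorm (iteratedFDeriv ℝ 1 ⇑u) ⊤ volume
      ≤ ENNReal.ofReal (C * (A + m2)) := by
        rw [eLpNorm_exponent_top]
        exact eLpNormEssSup_le_of_ae_bound (ae_of_all _ hpt)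
    _ = ENNReal.ofReal C * (ENNReal.ofReal A + ENNReal.ofReal m2) := by
        rw [ENNReal.ofReal_mul hCpos.le, ENNReal.ofReal_add hApos hm2pos]
    _ ≤ ENNReal.ofReal C * (eLpNorm (⇑u) 2 volume + eLpNorm (iteratedFDeriv ℝ 2 ⇑u) ⊤ volume) := by
        gcongr
        · rw [hAeq]
        · rw [hm2def]; exact ENNReal.ofReal_toReal_le
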